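/- arXiv:2201.06319 — 4 statements merged into one kernel-verified Lean document; each statement's English description precedes it below -/
import Mathlib

section
/- Every distortion function g can be written as g(u) = d_r·h_r(u) + d_l·h_l(u) for all u ∈ [0,1], where h_r is a right-continuous distortion function, h_l is a left-continuous distortion function, and d_r, d_l ∈ [0,1] with d_r + d_l = 1. -/
open Set

/-- A distortion function. -/
def IsDistortion (g : ℝ → ℝ) : Prop :=
  MonotoneOn g (Icc 0 1) ∧ (∀ u ∈ Icc (0:ℝ) 1, g u ∈ Icc (0:ℝ) 1) ∧ g 0 = 0 ∧ g 1 = 1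

section DistortionAux
open MeasureTheory

/-- The union of the "right-jump gaps" `(g v, g⁺ v)` in the range of `g`. -/
noncomputable def gapR (g : ℝ → ℝ) : Set ℝ :=
  ⋃ v ∈ Ico (0:ℝ) 1, Ioo (g v) (sInf (g '' Ioc v 1))

/-- `Fl g y` is the Lebesgue measure of `(0, y] ∩ gapR g`. -/
noncomputable def Fl (g : ℝ → ℝ) (y : ℝ) : ℝ := (volume (Ioc 0 y ∩ gapR g)).toReal

/-- The left-continuous part of `g` (unnormalized). -/
noncomputable def Hl (g : ℝ → ℝ) (u : ℝ) : ℝ := Fl g (g u)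
/-- The right-continuous part of `g` (unnormalized). -/
noncomputable def Hr (g : ℝ → ℝ) (u : ℝ) : ℝ := g u - Fl g (g u)

variable {g : ℝ → ℝ}

lemma gapR_open (g : ℝ → ℝ) : IsOpen (gapR g) := isOpen_biUnion fun _ _ => isOpen_Ioo

lemma vol_lt_top (g : ℝ → ℝ) (x y : ℝ) : volume (Ioc x y ∩ gapR g) < ⊤ :=
  lt_of_le_of_lt (measure_mono inter_subset_left)
    (by rw [Real.volume_Ioc]; exact ENNReal.ofReal_lt_top)

lemma Fl_nonneg (g : ℝ → ℝ) (y : ℝ) : 0 ≤ Fl g y := ENNReal.toReal_nonneg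

lemma Fl_mono (g : ℝ → ℝ) : Monotone (Fl g) := by
  intro x y hxy
  exact ENNReal.toReal_mono (vol_lt_top g 0 y).ne
    (measure_mono (inter_subset_inter_left _ (Ioc_subset_Ioc_right hxy)))

lemma Fl_zero (g : ℝ → ℝ) : Fl g 0 = 0 := by simp [Fl]

lemma Fl_sub {x y : ℝ} (hx : 0 ≤ x) (hxy : x ≤ y) :
    Fl g y - Fl g x = (volume (Ioc x y ∩ gapR g)).toReal := by
  have hsplit : Ioc 0 y ∩ gapR g = (Ioc 0 x ∩ gapR g) ∪ (Ioc x y ∩ gapR g) := by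
    rw [← union_inter_distrib_right, Ioc_union_Ioc_eq_Ioc hx hxy]
  have hdisj : Disjoint (Ioc 0 x ∩ gapR g) (Ioc x y ∩ gapR g) :=
    (Set.Ioc_disjoint_Ioc_of_le le_rfl).mono inter_subset_left inter_subset_left
  have hm : volume (Ioc 0 y ∩ gapR g)
      = volume (Ioc 0 x ∩ gapR g) + volume (Ioc x y ∩ gapR g) := by
    rw [hsplit, measure_union hdisj
      (measurableSet_Ioc.inter (gapR_open g).measurableSet)]
  unfold Fl
  rw [hm, ENNReal.toReal_add (vol_lt_top g 0 x).ne (vol_lt_top g x y).ne]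
  ring

lemma Fl_lip (g : ℝ → ℝ) {x y : ℝ} (hx : 0 ≤ x) (hxy : x ≤ y) :
    Fl g y - Fl g x ≤ y - x := by
  rw [Fl_sub hx hxy]
  have h : volume (Ioc x y ∩ gapR g) ≤ ENNReal.ofReal (y - x) :=
    le_trans (measure_mono inter_subset_left) (le_of_eq (Real.volume_Ioc))
  calc (volume (Ioc x y ∩ gapR g)).toReal ≤ (ENNReal.ofReal (y - x)).toReal :=
        ENNReal.toReal_mono ENNReal.ofReal_ne_top h
    _ = y - x := ENNReal.toReal_ofReal (by linarith)

lemma image_Ioc_nonempty {u : ℝ} (hu : u ∈ Ico (0:ℝ) 1) : (g '' Ioc u 1).Nonempty :=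
  (nonempty_Ioc.mpr hu.2).image g

lemma image_Ioc_bdd (hrange : ∀ u ∈ Icc (0:ℝ) 1, g u ∈ Icc (0:ℝ) 1)
    {u : ℝ} (hu : u ∈ Ico (0:ℝ) 1) : BddBelow (g '' Ioc u 1) := by
  refine ⟨0, fun y hy => ?_⟩
  obtain ⟨t, ht, rfl⟩ := hy
  exact (hrange t ⟨le_trans hu.1 ht.1.le, ht.2⟩).1

lemma le_gp (hmono : MonotoneOn g (Icc 0 1)) {u : ℝ} (hu : u ∈ Ico (0:ℝ) 1) :
    g u ≤ sInf (g '' Ioc u 1) := by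
  refine le_csInf (image_Ioc_nonempty hu) ?_
  rintro y ⟨t, ht, rfl⟩
  exact hmono ⟨hu.1, hu.2.le⟩ ⟨le_trans hu.1 ht.1.le, ht.2⟩ ht.1.le

lemma gp_le (hrange : ∀ u ∈ Icc (0:ℝ) 1, g u ∈ Icc (0:ℝ) 1)
    {u t : ℝ} (hu : u ∈ Ico (0:ℝ) 1) (ht : t ∈ Ioc u 1) :
    sInf (g '' Ioc u 1) ≤ g t :=
  csInf_le (image_Ioc_bdd hrange hu) (mem_image_of_mem g ht)

lemma image_Ico_nonempty {u : ℝ} (hu : u ∈ Ioc (0:ℝ) 1) : (g '' Ico 0 u).Nonempty :=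
  (nonempty_Ico.mpr hu.1).image g

lemma image_Ico_bdd (hrange : ∀ u ∈ Icc (0:ℝ) 1, g u ∈ Icc (0:ℝ) 1)
    {u : ℝ} (hu : u ∈ Ioc (0:ℝ) 1) : BddAbove (g '' Ico 0 u) := by
  refine ⟨1, fun y hy => ?_⟩
  obtain ⟨t, ht, rfl⟩ := hy
  exact (hrange t ⟨ht.1, le_trans ht.2.le hu.2⟩).2

lemma gm_le (hmono : MonotoneOn g (Icc 0 1)) {u : ℝ} (hu : u ∈ Ioc (0:ℝ) 1) :
    sSup (g '' Ico 0 u) ≤ g u := by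
  refine csSup_le (image_Ico_nonempty hu) ?_
  rintro y ⟨t, ht, rfl⟩
  exact hmono ⟨ht.1, le_trans ht.2.le hu.2⟩ ⟨hu.1.le, hu.2⟩ ht.2.le

lemma le_gm (hrange : ∀ u ∈ Icc (0:ℝ) 1, g u ∈ Icc (0:ℝ) 1)
    {u t : ℝ} (hu : u ∈ Ioc (0:ℝ) 1) (ht : t ∈ Ico 0 u) :
    g t ≤ sSup (g '' Ico 0 u) :=
  le_csSup (image_Ico_bdd hrange hu) (mem_image_of_mem g ht)

lemma gm_nonneg (hrange : ∀ u ∈ Icc (0:ℝ) 1, g u ∈ Icc (0:ℝ) 1)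
    {u : ℝ} (hu : u ∈ Ioc (0:ℝ) 1) : 0 ≤ sSup (g '' Ico 0 u) :=
  le_trans (hrange 0 ⟨le_refl 0, zero_le_one⟩).1 (le_gm hrange hu ⟨le_refl 0, hu.1⟩)

/-- Across the right gap of `u`, the set `gapR g` has full measure. -/
lemma Fl_gap_right (hrange : ∀ u ∈ Icc (0:ℝ) 1, g u ∈ Icc (0:ℝ) 1)
    {u y : ℝ} (hu : u ∈ Ico (0:ℝ) 1)
    (hy : y ∈ Icc (g u) (sInf (g '' Ioc u 1))) :
    volume (Ioc (g u) y ∩ gapR g) = ENNReal.ofReal (y - g u) := by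
  have hsub : Ioo (g u) y ⊆ Ioc (g u) y ∩ gapR g := by
    intro z hz
    exact ⟨⟨hz.1, hz.2.le⟩, mem_biUnion hu ⟨hz.1, lt_of_lt_of_le hz.2 hy.2⟩⟩
  refine le_antisymm ?_ ?_
  · exact le_trans (measure_mono inter_subset_left) (le_of_eq Real.volume_Ioc)
  · calc ENNReal.ofReal (y - g u) = volume (Ioo (g u) y) := Real.volume_Ioo.symm
      _ ≤ _ := measure_mono hsub

/-- The left gap of `u` is disjoint from `gapR g`. -/
lemma gap_left_empty (hmono : MonotoneOn g (Icc 0 1))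
    (hrange : ∀ u ∈ Icc (0:ℝ) 1, g u ∈ Icc (0:ℝ) 1)
    {u : ℝ} (hu : u ∈ Ioc (0:ℝ) 1) :
    Ioc (sSup (g '' Ico 0 u)) (g u) ∩ gapR g = ∅ := by
  ext y
  simp only [mem_inter_iff, mem_empty_iff_false, iff_false, not_and]
  intro hy hyR
  obtain ⟨v, hv, hyv⟩ := mem_iUnion₂.mp hyR
  rcases le_or_gt u v with h | h
  · have : g u ≤ g v := hmono ⟨hu.1.le, hu.2⟩ ⟨le_trans hu.1.le h, hv.2.le⟩ h
    exact absurd (lt_of_le_of_lt (hy.2.trans this) hyv.1) (lt_irrefl y)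
  · set t := (v + u) / 2 with ht
    have hvt : v < t := by rw [ht]; linarith [h]
    have htu : t < u := by rw [ht]; linarith [h]
    have h1 : sInf (g '' Ioc v 1) ≤ g t := gp_le hrange hv ⟨hvt, le_trans htu.le hu.2⟩
    have h2 : g t ≤ sSup (g '' Ico 0 u) := le_gm hrange hu ⟨le_trans hv.1 hvt.le, htu⟩
    exact absurd ((hyv.2.trans_le h1).trans_le (h2.trans hy.1.le)) (lt_irrefl y)

lemma Fl_eq_on_right_gap (hrange : ∀ u ∈ Icc (0:ℝ) 1, g u ∈ Icc (0:ℝ) 1)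
    {u y : ℝ} (hu : u ∈ Ico (0:ℝ) 1)
    (hy : y ∈ Icc (g u) (sInf (g '' Ioc u 1))) :
    Fl g y - Fl g (g u) = y - g u := by
  have h0 : (0:ℝ) ≤ g u := (hrange u ⟨hu.1, hu.2.le⟩).1
  rw [Fl_sub h0 hy.1, Fl_gap_right hrange hu hy,
    ENNReal.toReal_ofReal (by linarith [hy.1])]

lemma Fl_eq_at_left (hmono : MonotoneOn g (Icc 0 1))
    (hrange : ∀ u ∈ Icc (0:ℝ) 1, g u ∈ Icc (0:ℝ) 1)
    {u : ℝ} (hu : u ∈ Ioc (0:ℝ) 1) :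
    Fl g (g u) = Fl g (sSup (g '' Ico 0 u)) := by
  have h : Fl g (g u) - Fl g (sSup (g '' Ico 0 u)) = 0 := by
    rw [Fl_sub (gm_nonneg hrange hu) (gm_le hmono hu), gap_left_empty hmono hrange hu]
    simp
  linarith

/-- `Hr g` is right-continuous on `[0,1)`. -/
lemma Hr_right_cont (hmono : MonotoneOn g (Icc 0 1))
    (hrange : ∀ u ∈ Icc (0:ℝ) 1, g u ∈ Icc (0:ℝ) 1)
    {u₀ : ℝ} (hu : u₀ ∈ Ico (0:ℝ) 1) :
    ContinuousWithinAt (Hr g) (Ici u₀) u₀ := by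
  rw [Metric.continuousWithinAt_iff]
  intro ε hε
  set gp := sInf (g '' Ioc u₀ 1) with hgp
  obtain ⟨s, hs, hslt⟩ := exists_lt_of_csInf_lt (image_Ioc_nonempty hu)
    (show sInf (g '' Ioc u₀ 1) < gp + ε by rw [← hgp]; linarith)
  obtain ⟨t, ht, rfl⟩ := hs
  refine ⟨t - u₀, by linarith [ht.1], fun u huI hud => ?_⟩
  rcases eq_or_lt_of_le (mem_Ici.mp huI) with rfl | hlt
  · simpa using hε
  have hut : u < t := by
    rw [Real.dist_eq, abs_of_nonneg (by linarith)] at hud; linarith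
  have huIcc : u ∈ Icc (0:ℝ) 1 := ⟨le_trans hu.1 hlt.le, le_trans hut.le ht.2⟩
  have h1 : g u₀ ≤ gp := le_gp hmono hu
  have h2 : gp ≤ g u := gp_le hrange hu ⟨hlt, huIcc.2⟩
  have h3 : g u ≤ g t := hmono huIcc ⟨le_trans hu.1 ht.1.le, ht.2⟩ hut.le
  have h0 : (0:ℝ) ≤ g u₀ := (hrange u₀ ⟨hu.1, hu.2.le⟩).1
  have hkey : gp - Fl g gp = g u₀ - Fl g (g u₀) := by
    have := Fl_eq_on_right_gap hrange hu ⟨h1, le_refl gp⟩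
    linarith
  have hlip : Fl g (g u) - Fl g gp ≤ g u - gp := Fl_lip g (by linarith) h2
  have hmon : Fl g gp ≤ Fl g (g u) := Fl_mono g h2
  have hb : 0 ≤ Hr g u - Hr g u₀ ∧ Hr g u - Hr g u₀ < ε := by
    constructor <;> (simp only [Hr]; nlinarith)
  rw [Real.dist_eq, abs_of_nonneg hb.1]
  exact hb.2

/-- `Hl g` is left-continuous on `(0,1]`. -/
lemma Hl_left_cont (hmono : MonotoneOn g (Icc 0 1))
    (hrange : ∀ u ∈ Icc (0:ℝ) 1, g u ∈ Icc (0:ℝ) 1)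
    {u₀ : ℝ} (hu : u₀ ∈ Ioc (0:ℝ) 1) :
    ContinuousWithinAt (Hl g) (Iic u₀) u₀ := by
  rw [Metric.continuousWithinAt_iff]
  intro ε hε
  set gm := sSup (g '' Ico 0 u₀) with hgm
  obtain ⟨s, hs, hslt⟩ := exists_lt_of_lt_csSup (image_Ico_nonempty hu)
    (show gm - ε < sSup (g '' Ico 0 u₀) by rw [← hgm]; linarith)
  obtain ⟨t, ht, rfl⟩ := hs
  refine ⟨u₀ - t, by linarith [ht.2], fun u huI hud => ?_⟩
  rcases eq_or_lt_of_le (mem_Iic.mp huI) with rfl | hlt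
  · simpa using hε
  have htu : t < u := by
    rw [Real.dist_eq, abs_of_nonpos (by linarith)] at hud; linarith
  have huIcc : u ∈ Icc (0:ℝ) 1 := ⟨le_trans ht.1 htu.le, le_trans hlt.le hu.2⟩
  have h3 : g t ≤ g u := hmono ⟨ht.1, le_trans ht.2.le hu.2⟩ huIcc htu.le
  have h2 : g u ≤ gm := le_gm hrange hu ⟨huIcc.1, hlt⟩
  have h0 : (0:ℝ) ≤ g u := (hrange u huIcc).1
  have hkey : Fl g (g u₀) = Fl g gm := Fl_eq_at_left hmono hrange hu
  have hlip : Fl g gm - Fl g (g u) ≤ gm - g u := Fl_lip g h0 h2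
  have hmon : Fl g (g u) ≤ Fl g gm := Fl_mono g h2
  have hb : 0 ≤ Hl g u₀ - Hl g u ∧ Hl g u₀ - Hl g u < ε := by
    constructor <;> (simp only [Hl]; nlinarith)
  rw [Real.dist_eq, abs_of_nonpos (by linarith [hb.1])]
  linarith [hb.2]

lemma Hl_monoOn (hmono : MonotoneOn g (Icc 0 1)) :
    MonotoneOn (Hl g) (Icc 0 1) :=
  fun _ hx _ hy hxy => Fl_mono g (hmono hx hy hxy)

lemma Hr_monoOn (hmono : MonotoneOn g (Icc 0 1))
    (hrange : ∀ u ∈ Icc (0:ℝ) 1, g u ∈ Icc (0:ℝ) 1) :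
    MonotoneOn (Hr g) (Icc 0 1) := by
  intro x hx y hy hxy
  have h := Fl_lip g (hrange x hx).1 (hmono hx hy hxy)
  simp only [Hr]; linarith

lemma id_distortion : IsDistortion (fun u : ℝ => u) :=
  ⟨fun _ _ _ _ h => h, fun u hu => hu, rfl, rfl⟩

end DistortionAux

/-- Every distortion function `g` can be written as a convex combination
`g = d_r·h_r + d_l·h_l` on `[0,1]` of a right-continuous distortion function `h_r`
and a left-continuous distortion function `h_l`. -/
theorem distortion_convex_decomposition (g : ℝ → ℝ) (hg : IsDistortion g) :
    ∃ (d_r d_l : ℝ) (h_r h_l : ℝ → ℝ),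
      d_r ∈ Icc (0:ℝ) 1 ∧ d_l ∈ Icc (0:ℝ) 1 ∧ d_r + d_l = 1 ∧
      IsDistortion h_r ∧ IsDistortion h_l ∧
      (∀ u ∈ Ico (0:ℝ) 1, ContinuousWithinAt h_r (Ici u) u) ∧
      (∀ u ∈ Ioc (0:ℝ) 1, ContinuousWithinAt h_l (Iic u) u) ∧
      ∀ u ∈ Icc (0:ℝ) 1, g u = d_r * h_r u + d_l * h_l u := by
  obtain ⟨hmono, hrange, hg0, hg1⟩ := hg
  set c := Fl g 1 with hc
  have hc0 : 0 ≤ c := Fl_nonneg g 1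
  have hc1 : c ≤ 1 := by
    have := Fl_lip g (le_refl (0:ℝ)) zero_le_one
    have := Fl_zero g
    linarith
  -- endpoint values
  have hHl0 : Hl g 0 = 0 := by simp [Hl, hg0, Fl_zero]
  have hHl1 : Hl g 1 = c := by simp [Hl, hg1, hc]
  have hHr0 : Hr g 0 = 0 := by simp [Hr, hg0, Fl_zero]
  have hHr1 : Hr g 1 = 1 - c := by simp [Hr, hg1, hc]
  have hmem01 : ∀ u ∈ Icc (0:ℝ) 1, Hl g u ∈ Icc 0 c ∧ Hr g u ∈ Icc 0 (1 - c) := by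
    intro u hu
    have h01 : (0:ℝ) ∈ Icc (0:ℝ) 1 := ⟨le_refl 0, zero_le_one⟩
    have h11 : (1:ℝ) ∈ Icc (0:ℝ) 1 := ⟨zero_le_one, le_refl 1⟩
    constructor
    · constructor
      · rw [← hHl0]; exact Hl_monoOn hmono h01 hu hu.1
      · rw [← hHl1]; exact Hl_monoOn hmono hu h11 hu.2
    · constructor
      · rw [← hHr0]; exact Hr_monoOn hmono hrange h01 hu hu.1
      · rw [← hHr1]; exact Hr_monoOn hmono hrange hu h11 hu.2
  have hsum : ∀ u, Hr g u + Hl g u = g u := by intro u; simp [Hr, Hl]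
  by_cases hceq1 : c = 1
  · -- g is (up to endpoints) left-continuous: Hr ≡ 0
    have hHr_zero : ∀ u ∈ Icc (0:ℝ) 1, Hr g u = 0 := by
      intro u hu
      have h := (hmem01 u hu).2
      rw [hceq1] at h
      have := h.1; have := h.2; linarith
    refine ⟨0, 1, fun u => u, Hl g, ⟨le_refl 0, zero_le_one⟩, ⟨zero_le_one, le_refl 1⟩,
      by ring, id_distortion, ?_, ?_, ?_, ?_⟩
    · exact ⟨Hl_monoOn hmono, fun u hu => by
        have h := (hmem01 u hu).1; rw [hceq1] at h; exact h,
        hHl0, by rw [hHl1, hceq1]⟩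
    · exact fun u _ => continuous_id.continuousWithinAt
    · exact fun u hu => Hl_left_cont hmono hrange hu
    · intro u hu
      have := hsum u
      have := hHr_zero u hu
      linarith
  · by_cases hceq0 : c = 0
    · -- Hl ≡ 0
      have hHl_zero : ∀ u ∈ Icc (0:ℝ) 1, Hl g u = 0 := by
        intro u hu
        have h := (hmem01 u hu).1
        rw [hceq0] at h
        have := h.1; have := h.2; linarith
      refine ⟨1, 0, Hr g, fun u => u, ⟨zero_le_one, le_refl 1⟩, ⟨le_refl 0, zero_le_one⟩,
        by ring, ?_, id_distortion, ?_, ?_, ?_⟩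
      · exact ⟨Hr_monoOn hmono hrange, fun u hu => by
          have h := (hmem01 u hu).2; rw [hceq0] at h; simpa using h,
          hHr0, by rw [hHr1, hceq0]; ring⟩
      · exact fun u hu => Hr_right_cont hmono hrange hu
      · exact fun u _ => continuous_id.continuousWithinAt
      · intro u hu
        have := hsum u
        have := hHl_zero u hu
        linarith
    · -- general case : 0 < c < 1
      have hcpos : 0 < c := lt_of_le_of_ne hc0 (Ne.symm hceq0)
      have hclt : c < 1 := lt_of_le_of_ne hc1 hceq1
      have h1c : 0 < 1 - c := by linarith
      refine ⟨1 - c, c, fun u => Hr g u / (1 - c), fun u => Hl g u / c,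
        ⟨by linarith, by linarith⟩, ⟨hc0, hc1⟩, by ring, ?_, ?_, ?_, ?_, ?_⟩
      · refine ⟨fun x hx y hy hxy => ?_, fun u hu => ?_, ?_, ?_⟩
        · exact div_le_div_of_nonneg_right (Hr_monoOn hmono hrange hx hy hxy) h1c.le
        · have h := (hmem01 u hu).2
          exact ⟨div_nonneg h.1 h1c.le, by rw [div_le_one h1c]; linarith [h.2]⟩
        · show Hr g 0 / (1 - c) = 0
          rw [hHr0]; simp
        · show Hr g 1 / (1 - c) = 1
          rw [hHr1]; field_simp
      · refine ⟨fun x hx y hy hxy => ?_, fun u hu => ?_, ?_, ?_⟩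
        · exact div_le_div_of_nonneg_right (Hl_monoOn hmono hx hy hxy) hcpos.le
        · have h := (hmem01 u hu).1
          exact ⟨div_nonneg h.1 hcpos.le, by rw [div_le_one hcpos]; linarith [h.2]⟩
        · show Hl g 0 / c = 0
          rw [hHl0]; simp
        · show Hl g 1 / c = 1
          rw [hHl1]; field_simp
      · exact fun u hu => (Hr_right_cont hmono hrange hu).div_const _
      · exact fun u hu => (Hl_left_cont hmono hrange hu).div_const _
      · intro u hu
        have := hsum u
        field_simp
        linarith
end

section
/- Let g be a left-continuous distortion function and X a bounded random variable on a probability space. Then ρ_g(X) = ∫_{[0,1]} q_X(1-u) dg(u), where q_X(u) = inf{x : F_X(x) ≥ u} is the lower quantile function and the integral is the Lebesgue–Stieltjes integral with respect to the measure induced by g. -/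
open Set MeasureTheory Filter Topology

/-- The distortion risk measure
`ρ_g(X) = ∫_{-∞}^0 (g(P(X > x)) - 1) dx + ∫_0^∞ g(P(X > x)) dx`. -/
noncomputable def rho {Ω : Type*} [MeasurableSpace Ω] (P : Measure Ω)
    (g : ℝ → ℝ) (X : Ω → ℝ) : ℝ :=
  (∫ x in Iio (0:ℝ), (g ((P {ω | x < X ω}).toReal) - 1)) +
    ∫ x in Ioi (0:ℝ), g ((P {ω | x < X ω}).toReal)

/-- The lower quantile function `q_F(u) = inf {x | F x ≥ u}`. -/
noncomputable def lowerQuantile (F : ℝ → ℝ) (u : ℝ) : ℝ :=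
  sInf {x : ℝ | u ≤ F x}

/-- For a left-continuous distortion function `g` and a bounded random variable `X`,
`ρ_g(X) = ∫_{[0,1]} q_X(1 - u) dg(u)`, where the Lebesgue–Stieltjes integral is with
respect to the measure `μ` induced by `g` (i.e. `μ [a,b) = g b - g a`, concentrated
on `[0,1]` with total mass one). -/
theorem rho_eq_stieltjes_integral_of_leftContinuous {Ω : Type*} [MeasurableSpace Ω]
    (P : Measure Ω) [IsProbabilityMeasure P]
    (g : ℝ → ℝ) (hg : IsDistortion g)
    (hleft : ∀ u ∈ Ioc (0:ℝ) 1, ContinuousWithinAt g (Iic u) u)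
    (μ : Measure ℝ)
    (hμ : ∀ a b : ℝ, 0 ≤ a → a ≤ b → b ≤ 1 → μ (Ico a b) = ENNReal.ofReal (g b - g a))
    (hμ1 : μ (Icc (0:ℝ) 1) = 1) (hμc : μ (Icc (0:ℝ) 1)ᶜ = 0)
    (X : Ω → ℝ) (hX : Measurable X) (hbd : ∃ C, ∀ ω, |X ω| ≤ C) :
    rho P g X = ∫ u, lowerQuantile (fun x => (P {ω | X ω ≤ x}).toReal) (1 - u) ∂μ := by
  classical
  obtain ⟨C₀, hC₀⟩ := hbd
  obtain ⟨hgmono, hgmem, hg0, hg1⟩ := hg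
  set C : ℝ := max C₀ 0 with hCdef
  have hC : ∀ ω, |X ω| ≤ C := fun ω => (hC₀ ω).trans (le_max_left _ _)
  have hC0 : (0:ℝ) ≤ C := le_max_right _ _
  set F : ℝ → ℝ := fun x => (P {ω | X ω ≤ x}).toReal with hFdef
  set S : ℝ → ℝ := fun x => (P {ω | x < X ω}).toReal with hSdef
  have hms : ∀ x : ℝ, MeasurableSet {ω | x < X ω} :=
    fun x => measurableSet_lt measurable_const hX
  have hms' : ∀ x : ℝ, MeasurableSet {ω | X ω ≤ x} :=
    fun x => measurableSet_le hX measurable_const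
  have hfin : ∀ s : Set Ω, P s ≠ ⊤ := fun s => (measure_lt_top P s).ne
  -- S = 1 - F
  have hFS : ∀ x, S x = 1 - F x := by
    intro x
    have hcompl : {ω | x < X ω} = {ω | X ω ≤ x}ᶜ := by
      ext ω; simp [not_le]
    have hadd : P {ω | X ω ≤ x} + P {ω | x < X ω} = 1 := by
      rw [hcompl]
      have := measure_add_measure_compl (μ := P) (hms' x)
      rwa [measure_univ] at this
    have := congrArg ENNReal.toReal hadd
    rw [ENNReal.toReal_add (hfin _) (hfin _), ENNReal.toReal_one] at this
    simp only [hSdef, hFdef]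
    linarith
  have hFmem : ∀ x, F x ∈ Icc (0:ℝ) 1 := by
    intro x
    refine ⟨ENNReal.toReal_nonneg, ?_⟩
    simpa using ENNReal.toReal_mono ENNReal.one_ne_top (prob_le_one (μ := P))
  have hSmem : ∀ x, S x ∈ Icc (0:ℝ) 1 := by
    intro x
    refine ⟨ENNReal.toReal_nonneg, ?_⟩
    simpa using ENNReal.toReal_mono ENNReal.one_ne_top (prob_le_one (μ := P))
  have hFmono : Monotone F := by
    intro x y hxy
    exact ENNReal.toReal_mono (hfin _) (measure_mono fun ω (h : X ω ≤ x) => h.trans hxy)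
  have hF0 : ∀ x : ℝ, x < -C → F x = 0 := by
    intro x hx
    have : {ω | X ω ≤ x} = (∅ : Set Ω) := by
      ext ω
      simp only [mem_setOf_eq, mem_empty_iff_false, iff_false, not_le]
      have := (abs_le.mp (hC ω)).1
      linarith
    simp [hFdef, this]
  have hF1 : ∀ x : ℝ, C ≤ x → F x = 1 := by
    intro x hx
    have : {ω | X ω ≤ x} = (univ : Set Ω) := by
      ext ω
      simp only [mem_setOf_eq, mem_univ, iff_true]
      exact ((abs_le.mp (hC ω)).2).trans hx
    simp [hFdef, this]
  -- the quantile characterization (right-continuity of F)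
  have hq_iff : ∀ p : ℝ, 0 < p → p ≤ 1 → ∀ x : ℝ, (sInf {y | p ≤ F y} ≤ x ↔ p ≤ F x) := by
    intro p hp hp1 x
    have hTne : {y | p ≤ F y}.Nonempty := ⟨C, by simp only [mem_setOf_eq, hF1 C le_rfl]; exact hp1⟩
    have hTbdd : BddBelow {y | p ≤ F y} := by
      refine ⟨-C, fun y hy => ?_⟩
      by_contra h
      push_neg at h
      rw [mem_setOf_eq, hF0 y h] at hy
      linarith
    constructor
    · intro hle
      have hstep : ∀ n : ℕ, p ≤ F (x + 1 / (n + 1)) := by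
        intro n
        have hpos : (0:ℝ) < 1 / (n + 1) := by positivity
        obtain ⟨y, hyT, hylt⟩ := Real.lt_sInf_add_pos hTne hpos
        exact le_trans hyT (hFmono (by linarith))
      have htend : Tendsto (fun n : ℕ => F (x + 1 / (n + 1))) atTop (𝓝 (F x)) := by
        have hiInter : ⋂ n : ℕ, {ω | X ω ≤ x + 1 / (n + 1)} = {ω | X ω ≤ x} := by
          ext ω
          simp only [mem_iInter, mem_setOf_eq]
          constructor
          · intro h
            by_contra hlt
            push_neg at hlt
            obtain ⟨n, hn⟩ := exists_nat_one_div_lt (sub_pos.mpr hlt)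
            have := h n
            linarith
          · intro h n
            have : (0:ℝ) < 1 / (n + 1) := by positivity
            linarith
        have hanti : Antitone fun n : ℕ => {ω | X ω ≤ x + 1 / (n + 1)} := by
          intro m n hmn ω hω
          simp only [mem_setOf_eq] at hω ⊢
          have h1 : (1:ℝ) / (n + 1) ≤ 1 / (m + 1) := by
            apply one_div_le_one_div_of_le (by positivity)
            have : (m:ℝ) ≤ n := Nat.cast_le.mpr hmn
            linarith
          linarith
        have hmt := tendsto_measure_iInter_atTop (μ := P)
          (s := fun n : ℕ => {ω | X ω ≤ x + 1 / (n + 1)})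
          (fun n => (hms' _).nullMeasurableSet) hanti ⟨0, hfin _⟩
        rw [hiInter] at hmt
        exact (ENNReal.tendsto_toReal (hfin _)).comp hmt
      exact ge_of_tendsto' htend hstep
    · intro hpF
      exact csInf_le hTbdd hpF
  -- the auxiliary (globally antitone, bounded) quantile function
  set h : ℝ → ℝ := fun u => sInf ({y | 1 - max u 0 ≤ F y} ∩ Icc (-C) C) with hhdef
  have hCmem : ∀ u : ℝ, C ∈ {y | 1 - max u 0 ≤ F y} ∩ Icc (-C) C := by
    intro u
    refine ⟨?_, ⟨by linarith, le_rfl⟩⟩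
    rw [mem_setOf_eq, hF1 C le_rfl]
    have := le_max_right u 0
    linarith
  have hbddB : ∀ u : ℝ, BddBelow ({y | 1 - max u 0 ≤ F y} ∩ Icc (-C) C) :=
    fun u => ⟨-C, fun y hy => hy.2.1⟩
  have hh_anti : Antitone h := by
    intro u v huv
    apply csInf_le_csInf (hbddB v) ⟨C, hCmem u⟩
    intro y hy
    refine ⟨?_, hy.2⟩
    have : max u 0 ≤ max v 0 := max_le_max huv le_rfl
    have := hy.1
    rw [mem_setOf_eq] at this ⊢
    linarith
  have hh_mem : ∀ u : ℝ, h u ∈ Icc (-C) C := by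
    intro u
    constructor
    · exact le_csInf ⟨C, hCmem u⟩ fun y hy => hy.2.1
    · exact csInf_le (hbddB u) (hCmem u)
  have hh_eq : ∀ u : ℝ, 0 ≤ u → u < 1 → h u = sInf {y | 1 - u ≤ F y} := by
    intro u hu0 hu1
    have hmax : max u 0 = u := max_eq_left hu0
    have hTsub : ∀ y ∈ {y | 1 - u ≤ F y}, -C ≤ y := by
      intro y hy
      by_contra hc
      push_neg at hc
      rw [mem_setOf_eq, hF0 y hc] at hy
      linarith
    have hTC : C ∈ {y | 1 - u ≤ F y} := by
      rw [mem_setOf_eq, hF1 C le_rfl]; linarith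
    have hTbdd : BddBelow {y | 1 - u ≤ F y} := ⟨-C, hTsub⟩
    rw [hhdef]
    simp only [hmax]
    apply le_antisymm
    · apply le_csInf ⟨C, hTC⟩
      intro b hb
      rcases le_or_gt b C with h1 | h1
      · exact csInf_le (by exact ⟨-C, fun y hy => hy.2.1⟩) ⟨hb, ⟨hTsub b hb, h1⟩⟩
      · refine le_trans (csInf_le (by exact ⟨-C, fun y hy => hy.2.1⟩) ?_) h1.le
        exact ⟨hTC, ⟨by linarith, le_rfl⟩⟩
    · exact csInf_le_csInf hTbdd ⟨C, ⟨hTC, ⟨by linarith, le_rfl⟩⟩⟩ inter_subset_left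
  -- μ gives no mass outside [0,1) and is a probability measure
  have hone : μ {(1:ℝ)} = 0 := by
    have hdiff : Icc (0:ℝ) 1 \ Ico 0 1 = {1} := Icc_diff_Ico_same (by norm_num)
    have hIco : μ (Ico (0:ℝ) 1) = 1 := by
      rw [hμ 0 1 le_rfl (by norm_num) le_rfl, hg1, hg0]
      simp
    have := measure_diff (Ico_subset_Icc_self : Ico (0:ℝ) 1 ⊆ Icc 0 1)
      measurableSet_Ico.nullMeasurableSet (by rw [hIco]; exact ENNReal.one_ne_top)
    rw [hdiff, hμ1, hIco] at this
    simpa using this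
  have hIcoc : μ (Ico (0:ℝ) 1)ᶜ = 0 := by
    have hsub : (Ico (0:ℝ) 1)ᶜ ⊆ (Icc 0 1)ᶜ ∪ {1} := by
      intro y hy
      simp only [mem_compl_iff, mem_Ico, not_and_or, not_le, not_lt] at hy
      rcases hy with hy | hy
      · left; simp only [mem_compl_iff, mem_Icc, not_and_or, not_le]; left; exact hy
      · rcases eq_or_lt_of_le hy with hy1 | hy1
        · right; simp [hy1.symm]
        · left; simp only [mem_compl_iff, mem_Icc, not_and_or, not_le]; right; exact hy1
    exact measure_mono_null hsub (measure_union_null hμc hone)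
  have hμuniv : μ univ = 1 := by
    apply le_antisymm
    · calc μ univ = μ (Icc (0:ℝ) 1 ∪ (Icc (0:ℝ) 1)ᶜ) := by rw [union_compl_self]
        _ ≤ μ (Icc (0:ℝ) 1) + μ (Icc (0:ℝ) 1)ᶜ := measure_union_le _ _
        _ = 1 := by rw [hμ1, hμc, add_zero]
    · rw [← hμ1]; exact measure_mono (subset_univ _)
  haveI : IsProbabilityMeasure μ := ⟨hμuniv⟩
  -- the key tail-measure computation
  have hkey : ∀ x : ℝ, μ {u | x < h u} = ENNReal.ofReal (g (S x)) := by
    intro x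
    have hAinter : {u | x < h u} ∩ Ico 0 1 = Ico 0 (S x) := by
      ext u
      simp only [mem_inter_iff, mem_setOf_eq, mem_Ico]
      constructor
      · rintro ⟨hxh, hu0, hu1⟩
        refine ⟨hu0, ?_⟩
        rw [hh_eq u hu0 hu1] at hxh
        have h1 : ¬ (1 - u ≤ F x) := fun hc =>
          absurd ((hq_iff (1 - u) (by linarith) (by linarith) x).mpr hc) (not_le.mpr hxh)
        have h2 : F x < 1 - u := not_le.mp h1
        rw [hFS x]
        linarith
      · rintro ⟨hu0, huS⟩
        have hu1 : u < 1 := lt_of_lt_of_le huS (hSmem x).2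
        refine ⟨?_, hu0, hu1⟩
        rw [hh_eq u hu0 hu1]
        by_contra hc
        push_neg at hc
        have := (hq_iff (1 - u) (by linarith) (by linarith) x).mp hc
        rw [hFS x] at huS
        linarith
    calc μ {u | x < h u} = μ ({u | x < h u} ∩ Ico 0 1) := (measure_inter_conull hIcoc).symm
      _ = μ (Ico 0 (S x)) := by rw [hAinter]
      _ = ENNReal.ofReal (g (S x) - g 0) := hμ 0 (S x) le_rfl (hSmem x).1 (hSmem x).2
      _ = ENNReal.ofReal (g (S x)) := by rw [hg0, sub_zero]
  -- integrability of h
  have hh_int : Integrable h μ := by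
    refine Integrable.mono' (integrable_const C) hh_anti.measurable.aestronglyMeasurable ?_
    filter_upwards with u
    rw [Real.norm_eq_abs]
    exact abs_le.mpr ⟨(hh_mem u).1, (hh_mem u).2⟩
  -- layer cake for h + C
  have hfC_int : Integrable (fun u => h u + C) μ := hh_int.add (integrable_const C)
  have hlc : ∫ u, (h u + C) ∂μ
      = ∫ t in Ioi (0:ℝ), ENNReal.toReal (μ {u | t < h u + C}) :=
    hfC_int.integral_eq_integral_meas_lt (ae_of_all _ fun u => by have := (hh_mem u).1; show (0:ℝ) ≤ h u + C; linarith)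
  set φ : ℝ → ℝ := fun x => g (S x) with hφdef
  have hφ_mem : ∀ x, φ x ∈ Icc (0:ℝ) 1 := fun x => hgmem _ (hSmem x)
  have hSanti : Antitone S := by
    intro x y hxy
    exact ENNReal.toReal_mono (hfin _) (measure_mono fun ω (hω : y < X ω) => lt_of_le_of_lt hxy hω)
  have hφ_anti : Antitone φ := fun x y hxy => hgmono (hSmem y) (hSmem x) (hSanti hxy)
  have hφ0 : ∀ x : ℝ, C ≤ x → φ x = 0 := by
    intro x hx
    have hS : {ω | x < X ω} = (∅ : Set Ω) := by
      ext ω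
      simp only [mem_setOf_eq, mem_empty_iff_false, iff_false, not_lt]
      exact ((abs_le.mp (hC ω)).2).trans hx
    have : S x = 0 := by simp [hSdef, hS]
    rw [hφdef]; simp only [this, hg0]
  have hφ1 : ∀ x : ℝ, x < -C → φ x = 1 := by
    intro x hx
    have hS : {ω | x < X ω} = (univ : Set Ω) := by
      ext ω
      simp only [mem_setOf_eq, mem_univ, iff_true]
      have := (abs_le.mp (hC ω)).1
      linarith
    have : S x = 1 := by simp [hSdef, hS]
    rw [hφdef]; simp only [this, hg1]
  -- integrability of φ on finite-measure sets
  have hφm : Measurable φ := hφ_anti.measurable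
  have hint : ∀ s : Set ℝ, volume s < ⊤ → IntegrableOn φ s volume := by
    intro s hs
    haveI : Fact (volume s < ⊤) := ⟨hs⟩
    refine Integrable.mono' (integrable_const 1) hφm.aestronglyMeasurable.restrict ?_
    filter_upwards with x
    rw [Real.norm_eq_abs]
    exact abs_le.mpr ⟨by linarith [(hφ_mem x).1], (hφ_mem x).2⟩
  have hIoi0_int : IntegrableOn φ (Ioi (0:ℝ)) volume := by
    have heq : EqOn ((Ioc (0:ℝ) C).indicator φ) φ (Ioi 0) := by
      intro x hx
      by_cases hxC : x ≤ C
      · rw [indicator_of_mem (mem_Ioc.mpr ⟨hx, hxC⟩)]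
      · rw [indicator_of_notMem (fun hm => hxC hm.2), hφ0 x (le_of_not_ge hxC)]
    exact IntegrableOn.congr_fun
      ((hint (Ioc 0 C) (by simp [Real.volume_Ioc])).integrable_indicator
        measurableSet_Ioc).integrableOn heq measurableSet_Ioi
  have hIoc_int : IntegrableOn φ (Ioc (-C) (0:ℝ)) volume :=
    hint _ (by simp [Real.volume_Ioc])
  have hIoiC_int : IntegrableOn φ (Ioi (-C)) volume := by
    rw [← Ioc_union_Ioi_eq_Ioi (by linarith : -C ≤ (0:ℝ))]
    exact hIoc_int.union hIoi0_int
  -- the layer-cake integrand equals φ (· - C)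
  have hmeq : ∀ t : ℝ, ENNReal.toReal (μ {u | t < h u + C}) = φ (t - C) := by
    intro t
    have hset : {u | t < h u + C} = {u | t - C < h u} := by
      ext u
      simp only [mem_setOf_eq]
      constructor <;> intro hu <;> linarith
    rw [hset, hkey (t - C), ENNReal.toReal_ofReal (hφ_mem (t - C)).1]
  -- change of variables
  have hshift : ∫ t in Ioi (0:ℝ), φ (t - C) = ∫ x in Ioi (-C), φ x := by
    have hmp : MeasurePreserving (fun t : ℝ => t - C) volume volume :=
      measurePreserving_sub_right volume C
    have hemb : MeasurableEmbedding (fun t : ℝ => t - C) :=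
      (MeasurableEquiv.subRight C).measurableEmbedding
    have hpre : (fun t : ℝ => t - C) ⁻¹' (Ioi (-C)) = Ioi (0:ℝ) := by
      ext t
      simp only [mem_preimage, mem_Ioi]
      constructor <;> intro ht <;> linarith
    rw [← hpre, hmp.setIntegral_preimage_emb hemb φ (Ioi (-C))]
  -- rewriting the first piece of rho
  have hA : ∫ x in Iio (0:ℝ), (φ x - 1) = (∫ x in Ioo (-C) 0, φ x) - C := by
    have heq : EqOn (fun x => φ x - 1) ((Ico (-C) 0).indicator (fun x => φ x - 1)) (Iio 0) := by
      intro x hx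
      by_cases hxC : -C ≤ x
      · rw [indicator_of_mem (mem_Ico.mpr ⟨hxC, hx⟩)]
      · rw [indicator_of_notMem (fun hm => hxC hm.1)]
        simp only [hφ1 x (lt_of_not_ge hxC), sub_self]
    rw [setIntegral_congr_fun measurableSet_Iio heq,
      setIntegral_indicator measurableSet_Ico]
    have hss : Iio (0:ℝ) ∩ Ico (-C) 0 = Ico (-C) 0 :=
      inter_eq_self_of_subset_right fun x hx => hx.2
    rw [hss, integral_Ico_eq_integral_Ioo]
    have hIoo_int : IntegrableOn φ (Ioo (-C) (0:ℝ)) volume :=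
      hint _ (by simp [Real.volume_Ioo])
    haveI : Fact (volume (Ioo (-C) (0:ℝ)) < ⊤) :=
      ⟨by simp [Real.volume_Ioo]⟩
    rw [integral_sub hIoo_int (integrable_const 1)]
    have : ∫ (_ : ℝ) in Ioo (-C) 0, (1:ℝ) = C := by
      rw [setIntegral_const, measureReal_def, Real.volume_Ioo]
      simp only [smul_eq_mul, mul_one, sub_neg_eq_add, zero_add]
      exact ENNReal.toReal_ofReal hC0
    rw [this]
  -- splitting the shifted integral
  have hsplit : ∫ x in Ioi (-C), φ x = (∫ x in Ioc (-C) 0, φ x) + ∫ x in Ioi (0:ℝ), φ x := by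
    rw [← Ioc_union_Ioi_eq_Ioi (by linarith : -C ≤ (0:ℝ))]
    refine setIntegral_union ?_ measurableSet_Ioi hIoc_int hIoi0_int
    exact disjoint_left.mpr fun x hx1 hx2 => absurd hx2 (not_lt.mpr hx1.2)
  -- the right-hand side equals ∫ h dμ
  have hR : ∫ u, lowerQuantile (fun x => (P {ω | X ω ≤ x}).toReal) (1 - u) ∂μ = ∫ u, h u ∂μ := by
    apply integral_congr_ae
    have hsub : {u : ℝ | lowerQuantile (fun x => (P {ω | X ω ≤ x}).toReal) (1 - u) ≠ h u}
        ⊆ (Ico (0:ℝ) 1)ᶜ := by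
      intro u hu
      simp only [mem_compl_iff, mem_Ico, not_and_or, not_le, not_lt]
      by_contra hc
      push_neg at hc
      apply hu
      rw [hh_eq u hc.1 hc.2]
      rfl
    exact (measure_mono_null hsub hIcoc : _)
  -- assemble everything
  have hhint2 : ∫ u, (h u + C) ∂μ = (∫ u, h u ∂μ) + C := by
    rw [integral_add hh_int (integrable_const C), integral_const]
    simp
  have hmain : (∫ u, h u ∂μ) + C = ∫ x in Ioi (-C), φ x := by
    rw [← hhint2, hlc]
    rw [setIntegral_congr_fun measurableSet_Ioi (fun t _ => hmeq t)]
    exact hshift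
  rw [hR]
  have hrho : rho P g X = ((∫ x in Ioo (-C) 0, φ x) - C) + ∫ x in Ioi (0:ℝ), φ x := by
    rw [rho, ← hA]
  rw [hrho]
  have : ∫ x in Ioc (-C) 0, φ x = ∫ x in Ioo (-C) 0, φ x := integral_Ioc_eq_integral_Ioo
  rw [hsplit, this] at hmain
  linarith
end

section
/- The GlueV@R distortion function g with parameters 0 ≤ β < α ≤ 1 and 0 ≤ h₁ ≤ h₂ ≤ 1, defined by g(u) = (h₁/β)u on [0,β], g(u) = h₁ + (h₂-h₁)/(α-β)·(u-β) on (β,α], g(u) = 1 on (α,1], yields GlueV@R = w₁·AV@R_β + w₂·AV@R_α + w₃·V@R_α with w₁ = h₁ - (h₂-h₁)β/(α-β), w₂ = (h₂-h₁)α/(α-β), w₃ = 1 - h₂; in particular w₁ + w₂ + w₃ = 1 and w₁·g_{AV@R_β}(u) + w₂·g_{AV@R_α}(u) + w₃·g_{V@R_α}(u) = g(u) for all u ∈ [0,1]. -/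
open Set

/-- The AV@R distortion function at level `γ`. -/
noncomputable def gAVaR (γ : ℝ) (u : ℝ) : ℝ :=
  if u ≤ γ then u / γ else 1

/-- The V@R distortion function at level `γ` (on `[0,1]`). -/
noncomputable def gVaR (γ : ℝ) (u : ℝ) : ℝ :=
  if γ < u then 1 else 0

/-- The GlueV@R distortion function. -/
noncomputable def gGlue (β α h₁ h₂ : ℝ) (u : ℝ) : ℝ :=
  if u ≤ β then h₁ / β * u
  else if u ≤ α then h₁ + (h₂ - h₁) / (α - β) * (u - β)
  else 1

/-- GlueV@R decomposes as `w₁·AV@R_β + w₂·AV@R_α + w₃·V@R_α` with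
`w₁ = h₁ − (h₂−h₁)β/(α−β)`, `w₂ = (h₂−h₁)α/(α−β)`, `w₃ = 1 − h₂`: the weights sum to
one and the distortion functions satisfy the corresponding pointwise identity on `[0,1]`. -/
theorem glueVaR_decomposition (β α h₁ h₂ : ℝ)
    (hβ : 0 < β) (hβα : β < α) (hα : α ≤ 1)
    (h₁0 : 0 ≤ h₁) (h₁₂ : h₁ ≤ h₂) (h₂1 : h₂ ≤ 1) :
    (h₁ - (h₂ - h₁) * β / (α - β)) + (h₂ - h₁) * α / (α - β) + (1 - h₂) = 1 ∧
    ∀ u ∈ Icc (0:ℝ) 1,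
      (h₁ - (h₂ - h₁) * β / (α - β)) * gAVaR β u
          + ((h₂ - h₁) * α / (α - β)) * gAVaR α u
          + (1 - h₂) * gVaR α u
        = gGlue β α h₁ h₂ u := by
  have hab : α - β ≠ 0 := by linarith
  have hβ' : β ≠ 0 := ne_of_gt hβ
  have hα' : α ≠ 0 := by linarith
  constructor
  · field_simp
    ring
  · intro u hu
    unfold gAVaR gVaR gGlue
    rcases le_or_gt u β with h1 | h1
    · have h2 : u ≤ α := by linarith
      have h3 : ¬ α < u := by linarith
      simp only [if_pos h1, if_pos h2, if_neg h3]
      field_simp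
      ring
    · rcases le_or_gt u α with h2 | h2
      · have h3 : ¬ u ≤ β := not_le.mpr h1
        have h4 : ¬ α < u := not_lt.mpr h2
        simp only [if_neg h3, if_pos h2, if_neg h4]
        field_simp
        ring
      · have h3 : ¬ u ≤ β := by push_neg; linarith
        have h4 : ¬ u ≤ α := not_le.mpr h2
        simp only [if_neg h3, if_neg h4, if_pos h2]
        field_simp
        ring
end

section
/- Let g_ν be the t-density with ν degrees of freedom and f_{ν,γ} the skewed-t density with skewness γ ≥ 1. Then the ratio f_{ν,γ}(x)/g_ν(x) is bounded above by k = ((γ + 1/γ)/2)·γ^{ν+1} for all x ∈ ℝ. -/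
open Real

/-- The density of the t-distribution with `ν` degrees of freedom. -/
noncomputable def tDensity (ν : ℝ) (x : ℝ) : ℝ :=
  Real.Gamma ((ν + 1) / 2) / (Real.sqrt (ν * π) * Real.Gamma (ν / 2))
    * Real.rpow (1 + x ^ 2 / ν) (-((ν + 1) / 2))

/-- The skewed-t density of Fernández and Steel. -/
noncomputable def skewTDensity (ν γ : ℝ) (x : ℝ) : ℝ :=
  2 / (γ + 1 / γ)
    * (if 0 ≤ x then tDensity ν (x / γ) else tDensity ν (γ * x))

private lemma rpow_ratio_bound (ν γ : ℝ) (hν : 0 < ν) (hγ : 1 ≤ γ)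
    {a b : ℝ} (ha : 0 < a) (hb : 0 < b) (hab : a ≤ γ ^ 2 * b) :
    Real.rpow b (-((ν + 1) / 2)) / Real.rpow a (-((ν + 1) / 2))
      ≤ Real.rpow γ (ν + 1) := by
  have hγ0 : (0:ℝ) < γ := lt_of_lt_of_le one_pos hγ
  have hp0 : 0 < (ν + 1) / 2 := by linarith
  simp only [Real.rpow_eq_pow]
  have h1 : b ^ (-((ν + 1) / 2)) / a ^ (-((ν + 1) / 2))
      = (a / b) ^ ((ν + 1) / 2) := by
    rw [Real.rpow_neg hb.le, Real.rpow_neg ha.le, Real.div_rpow ha.le hb.le]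
    field_simp
  rw [h1]
  have h2 : a / b ≤ γ ^ 2 := by
    rw [div_le_iff₀ hb]; linarith
  calc (a / b) ^ ((ν + 1) / 2) ≤ (γ ^ 2) ^ ((ν + 1) / 2) :=
        Real.rpow_le_rpow (by positivity) h2 hp0.le
    _ = γ ^ (ν + 1) := by
        rw [← Real.rpow_natCast γ 2, ← Real.rpow_mul hγ0.le]
        norm_num
        congr 1
        ring

/-- Acceptance–rejection bound: for `γ ≥ 1`, the ratio of the skewed-t density to the
t-density is bounded above by `k = ((γ + 1/γ)/2)·γ^(ν+1)` for all `x`. -/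
theorem skewT_density_ratio_bound (ν γ : ℝ) (hν : 0 < ν) (hγ : 1 ≤ γ) :
    ∀ x : ℝ, skewTDensity ν γ x / tDensity ν x
      ≤ (γ + 1 / γ) / 2 * Real.rpow γ (ν + 1) := by
  intro x
  have hγ0 : (0:ℝ) < γ := lt_of_lt_of_le one_pos hγ
  have hs2 : (2:ℝ) ≤ γ + 1 / γ := by
    have h : γ + 1 / γ - 2 = (γ - 1) ^ 2 / γ := by field_simp; ring
    nlinarith [div_nonneg (sq_nonneg (γ - 1)) hγ0.le]
  have hC : 0 < Real.Gamma ((ν + 1) / 2) / (Real.sqrt (ν * π) * Real.Gamma (ν / 2)) := by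
    apply div_pos (Real.Gamma_pos_of_pos (by linarith))
    exact mul_pos (Real.sqrt_pos.mpr (mul_pos hν Real.pi_pos))
      (Real.Gamma_pos_of_pos (by linarith))
  have htd : ∀ y : ℝ, 0 ≤ tDensity ν y := by
    intro y
    unfold tDensity
    exact mul_nonneg hC.le (Real.rpow_nonneg (by positivity) _)
  have key : (if 0 ≤ x then tDensity ν (x / γ) else tDensity ν (γ * x)) / tDensity ν x
      ≤ Real.rpow γ (ν + 1) := by
    have ha : 0 < 1 + x ^ 2 / ν := by positivity
    split_ifs with hx
    · have hb : 0 < 1 + (x / γ) ^ 2 / ν := by positivity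
      have hab : 1 + x ^ 2 / ν ≤ γ ^ 2 * (1 + (x / γ) ^ 2 / ν) := by
        have h1 : γ ^ 2 * ((x / γ) ^ 2 / ν) = x ^ 2 / ν := by
          field_simp
        nlinarith [sq_nonneg γ]
      have h := rpow_ratio_bound ν γ hν hγ ha hb hab
      calc tDensity ν (x / γ) / tDensity ν x
          = Real.rpow (1 + (x / γ) ^ 2 / ν) (-((ν + 1) / 2))
            / Real.rpow (1 + x ^ 2 / ν) (-((ν + 1) / 2)) := by
            unfold tDensity
            rw [mul_div_mul_left _ _ hC.ne']
        _ ≤ Real.rpow γ (ν + 1) := h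
    · have hb : 0 < 1 + (γ * x) ^ 2 / ν := by positivity
      have hab : 1 + x ^ 2 / ν ≤ γ ^ 2 * (1 + (γ * x) ^ 2 / ν) := by
        have h1 : (1:ℝ) ≤ γ ^ 2 := by nlinarith
        have h2 : x ^ 2 / ν ≤ γ ^ 2 * ((γ * x) ^ 2 / ν) := by
          have : γ ^ 2 * ((γ * x) ^ 2 / ν) = γ ^ 4 * (x ^ 2 / ν) := by
            field_simp
          rw [this]
          nlinarith [div_nonneg (sq_nonneg x) hν.le, sq_nonneg (γ ^ 2 - 1)]
        nlinarith [mul_nonneg (sq_nonneg γ) hb.le]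
      have h := rpow_ratio_bound ν γ hν hγ ha hb hab
      calc tDensity ν (γ * x) / tDensity ν x
          = Real.rpow (1 + (γ * x) ^ 2 / ν) (-((ν + 1) / 2))
            / Real.rpow (1 + x ^ 2 / ν) (-((ν + 1) / 2)) := by
            unfold tDensity
            rw [mul_div_mul_left _ _ hC.ne']
        _ ≤ Real.rpow γ (ν + 1) := h
  have hratio_nonneg : 0 ≤ (if 0 ≤ x then tDensity ν (x / γ) else tDensity ν (γ * x))
      / tDensity ν x := by
    apply div_nonneg _ (htd x)
    split_ifs <;> apply htd
  have hfrac : 2 / (γ + 1 / γ) ≤ 1 := by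
    rw [div_le_one (by linarith)]; exact hs2
  have hK : 0 ≤ Real.rpow γ (ν + 1) := Real.rpow_nonneg hγ0.le _
  unfold skewTDensity
  rw [mul_div_assoc]
  calc 2 / (γ + 1 / γ) * ((if 0 ≤ x then tDensity ν (x / γ) else tDensity ν (γ * x))
        / tDensity ν x)
      ≤ 1 * Real.rpow γ (ν + 1) :=
        mul_le_mul hfrac key hratio_nonneg zero_le_one
    _ ≤ (γ + 1 / γ) / 2 * Real.rpow γ (ν + 1) := by
        apply mul_le_mul_of_nonneg_right _ hK
        linarith
end
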